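/- Let z_{n,k} denote the number of inversion sequences e of length n avoiding both patterns 101 and 110 with zero(e) = k. Then z_{1,k} = 1 if k = 1 and 0 otherwise, and for all n ≥ 2 and 1 ≤ k ≤ n: z_{n,k} = z_{n−1,k−1} + k·z_{n−1,k} + ∑_{j=k+1}^{n−1} z_{n−1,j} (where z_{n−1,0} = 0). Consequently z_{n,k} = T_{n,k}, the triangle defined by the same recurrence with T_{1,i} = δ_{1,i}, which counts indecomposable set partitions of [n+1] whose k-th block (blocks ordered by decreasing smallest element) contains n+1. -/

import Mathlib

/-- An inversion sequence of length `n` (0-indexed): `e i ≤ i` for all `i`. -/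
def InvSeq {n : ℕ} (e : Fin n → ℕ) : Prop := ∀ i : Fin n, e i ≤ (i : ℕ)

/-- `e` contains the pattern `p` (a word of nonnegative integers): there is a
strictly increasing choice of positions on which `e` is order-isomorphic to `p`. -/
def Contains {n : ℕ} (e : Fin n → ℕ) (p : List ℕ) : Prop :=
  ∃ s : Fin p.length → Fin n, StrictMono s ∧
    ∀ a b : Fin p.length,
      (p.get a < p.get b ↔ e (s a) < e (s b)) ∧
      (p.get a = p.get b ↔ e (s a) = e (s b))

/-- `e` avoids the pattern `p`. -/
def Avoids {n : ℕ} (e : Fin n → ℕ) (p : List ℕ) : Prop := ¬ Contains e p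

/-- The number of zero entries of `e`. -/
def zeroStat {n : ℕ} (e : Fin n → ℕ) : ℕ :=
  (Finset.univ.filter (fun i : Fin n => e i = 0)).card

/-- The number of distinct positive values among the entries of `e`. -/
def distStat {n : ℕ} (e : Fin n → ℕ) : ℕ :=
  ((Finset.univ.image e).filter (fun v => 0 < v)).card

/-- The number of repeated entries of `e`: `n - dist e`. -/
def repStat {n : ℕ} (e : Fin n → ℕ) : ℕ := n - distStat e

/-- The number of saturated entries of `e` (1-indexed: `e_i = i - 1`). -/
def satuStat {n : ℕ} (e : Fin n → ℕ) : ℕ :=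
  (Finset.univ.filter (fun i : Fin n => e i = (i : ℕ))).card

/-- `z n k` is the number of `(101,110)`-avoiding inversion sequences of length `n`
with exactly `k` zero entries. -/
noncomputable def z (n k : ℕ) : ℕ :=
  Nat.card {e : Fin n → ℕ //
    InvSeq e ∧ Avoids e [1,0,1] ∧ Avoids e [1,1,0] ∧ zeroStat e = k}

/-- The triangle `T n k` (OEIS A086211) defined by `T 1 i = δ 1 i` and
`T n k = T (n-1) (k-1) + k * T (n-1) k + ∑_{j=k+1}^{n-1} T (n-1) j` for `1 ≤ k ≤ n`. -/
def T : ℕ → ℕ → ℕ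
  | 0, _ => 0
  | 1, k => if k = 1 then 1 else 0
  | n + 2, k =>
      if k = 0 then 0
      else T (n + 1) (k - 1) + k * T (n + 1) k +
        ∑ j ∈ Finset.Icc (k + 1) (n + 1), T (n + 1) j


set_option maxRecDepth 4000

def NoPat {n : ℕ} (e : Fin n → ℕ) : Prop :=
  ∀ i l j : Fin n, i < l → i < j → e i = e l → e i ≤ e j

lemma contains101 {n : ℕ} (e : Fin n → ℕ) (i j l : Fin n) (h1 : i < j) (h2 : j < l)
    (he : e i = e l) (hlt : e j < e i) : Contains e [1,0,1] := by
  refine ⟨fun a => if (a : ℕ) = 0 then i else if (a : ℕ) = 1 then j else l, ?_, ?_⟩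
  · intro a b hab
    obtain ⟨av, ha⟩ := a; obtain ⟨bv, hb⟩ := b
    simp only [List.length_cons, List.length_nil] at ha hb
    simp only [Fin.mk_lt_mk] at hab
    interval_cases av <;> interval_cases bv <;>
      first
        | exact absurd hab (by omega)
        | exact h1
        | exact h2
        | exact h1.trans h2
  · intro a b
    obtain ⟨av, ha⟩ := a; obtain ⟨bv, hb⟩ := b
    simp only [List.length_cons, List.length_nil] at ha hb
    interval_cases av <;> interval_cases bv <;>
      simp_all [List.get, Fin.le_def] <;> omega

lemma contains110 {n : ℕ} (e : Fin n → ℕ) (i j l : Fin n) (h1 : i < j) (h2 : j < l)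
    (he : e i = e j) (hlt : e l < e i) : Contains e [1,1,0] := by
  refine ⟨fun a => if (a : ℕ) = 0 then i else if (a : ℕ) = 1 then j else l, ?_, ?_⟩
  · intro a b hab
    obtain ⟨av, ha⟩ := a; obtain ⟨bv, hb⟩ := b
    simp only [List.length_cons, List.length_nil] at ha hb
    simp only [Fin.mk_lt_mk] at hab
    interval_cases av <;> interval_cases bv <;>
      first
        | exact absurd hab (by omega)
        | exact h1
        | exact h2
        | exact h1.trans h2
  · intro a b
    obtain ⟨av, ha⟩ := a; obtain ⟨bv, hb⟩ := b
    simp only [List.length_cons, List.length_nil] at ha hb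
    interval_cases av <;> interval_cases bv <;>
      simp_all [List.get, Fin.le_def] <;> omega

lemma avoids_iff {n : ℕ} (e : Fin n → ℕ) :
    (Avoids e [1,0,1] ∧ Avoids e [1,1,0]) ↔ NoPat e := by
  constructor
  · rintro ⟨h1, h2⟩ i l j hil hij heq
    by_contra hlt
    push_neg at hlt
    rcases lt_trichotomy j l with hjl | rfl | hlj
    · exact h1 (contains101 e i j l hij hjl heq hlt)
    · omega
    · exact h2 (contains110 e i l j hil hlj heq (heq ▸ hlt))
  · intro hC
    constructor
    · rintro ⟨s, hs, h⟩
      have heq : e (s ⟨0, by norm_num⟩) = e (s ⟨2, by norm_num⟩) :=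
        ((h ⟨0, by norm_num⟩ ⟨2, by norm_num⟩).2).mp rfl
      have hlt : e (s ⟨1, by norm_num⟩) < e (s ⟨0, by norm_num⟩) :=
        ((h ⟨1, by norm_num⟩ ⟨0, by norm_num⟩).1).mp (by decide)
      have := hC (s ⟨0, by norm_num⟩) (s ⟨2, by norm_num⟩) (s ⟨1, by norm_num⟩)
        (hs (by decide)) (hs (by decide)) heq
      omega
    · rintro ⟨s, hs, h⟩
      have heq : e (s ⟨0, by norm_num⟩) = e (s ⟨1, by norm_num⟩) :=
        ((h ⟨0, by norm_num⟩ ⟨1, by norm_num⟩).2).mp rfl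
      have hlt : e (s ⟨2, by norm_num⟩) < e (s ⟨0, by norm_num⟩) :=
        ((h ⟨2, by norm_num⟩ ⟨0, by norm_num⟩).1).mp (by decide)
      have := hC (s ⟨0, by norm_num⟩) (s ⟨1, by norm_num⟩) (s ⟨2, by norm_num⟩)
        (hs (by decide)) (hs (by decide)) heq
      omega

-- deletion map
def del {m : ℕ} (e : Fin (m+1) → ℕ) : Fin m → ℕ := fun i => e i.succ - 1

lemma finite_inv {n : ℕ} (q : (Fin n → ℕ) → Prop) :
    Finite {e : Fin n → ℕ // InvSeq e ∧ q e} := by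
  apply Finite.of_injective
    (fun e : {e : Fin n → ℕ // InvSeq e ∧ q e} =>
      (fun i => (⟨e.1 i, by have h := e.2.1 i; have := i.isLt; omega⟩ : Fin (n+1)) :
        Fin n → Fin (n+1)))
  intro x y hxy
  apply Subtype.ext
  funext i
  have := congrFun hxy i
  simpa [Fin.mk.injEq] using this

/-- the subtype of avoiding inversion sequences with k zeros -/
def SubP (n k : ℕ) : Type :=
  {e : Fin n → ℕ // InvSeq e ∧ NoPat e ∧ zeroStat e = k}

noncomputable def z' (n k : ℕ) : ℕ := Nat.card (SubP n k)

instance subPFinite (n k : ℕ) : Finite (SubP n k) := finite_inv _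

lemma zeroStat_le {n : ℕ} (e : Fin n → ℕ) : zeroStat e ≤ n := by
  unfold zeroStat
  calc (Finset.univ.filter (fun i : Fin n => e i = 0)).card
      ≤ Finset.univ.card := Finset.card_filter_le _ _
    _ = n := by simp

lemma zeroStat_pos {n : ℕ} (hn : 0 < n) (e : Fin n → ℕ) (he : InvSeq e) :
    1 ≤ zeroStat e := by
  have h0 : e ⟨0, hn⟩ = 0 := by have := he ⟨0, hn⟩; simpa using this
  unfold zeroStat
  apply Finset.card_pos.2
  exact ⟨⟨0, hn⟩, by simp [h0]⟩

lemma z'_gt {m j : ℕ} (h : m < j) : z' m j = 0 := by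
  have : IsEmpty (SubP m j) := by
    constructor; rintro ⟨e, _, _, hz⟩
    have := zeroStat_le e; omega
  exact Nat.card_of_isEmpty

lemma z'_zero {m : ℕ} (h : 1 ≤ m) : z' m 0 = 0 := by
  have : IsEmpty (SubP m 0) := by
    constructor; rintro ⟨e, hinv, _, hz⟩
    have := zeroStat_pos h e hinv; omega
  exact Nat.card_of_isEmpty

lemma invSeq_del {m : ℕ} (e : Fin (m+1) → ℕ) (he : InvSeq e) : InvSeq (del e) := by
  intro i
  have := he i.succ
  simp [del, Fin.val_succ] at *
  omega

lemma noPat_del {m : ℕ} (e : Fin (m+1) → ℕ) (he : NoPat e) : NoPat (del e) := by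
  intro i l j hil hij heq
  simp only [del] at heq ⊢
  rcases Nat.eq_zero_or_pos (e i.succ - 1) with h0 | hpos
  · omega
  · have h1 : e i.succ = e l.succ := by omega
    have := he i.succ l.succ j.succ (by simpa [Fin.succ_lt_succ_iff] using hil)
      (by simpa [Fin.succ_lt_succ_iff] using hij) h1
    omega

section OSetCount
open Finset

variable {m : ℕ} (Z : Finset (Fin m))

/-- suffix condition on a set of "raised" zero positions -/
def CondO (O : Finset (Fin m)) : Prop :=
  ∀ i₁ ∈ O, ∀ i₂ ∈ O, i₁ < i₂ → ∀ l ∈ Z, i₁ < l → l ∈ O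

def OSet (k : ℕ) : Type _ :=
  {O : Finset (Fin m) // O ⊆ Z ∧ CondO Z O ∧ Z.card + 1 = k + O.card}

def NN (j k : ℕ) : ℕ :=
  if k = j + 1 then 1 else if k = j then j else if k < j then 1 else 0

-- rank from the top
private def rk (x : Fin m) : ℕ := (Z.filter (fun l => x ≤ l)).card

private lemma rk_pos {x : Fin m} (hx : x ∈ Z) : 1 ≤ rk Z x :=
  Finset.card_pos.2 ⟨x, by simp [rk, hx]⟩

private lemma rk_le {x : Fin m} : rk Z x ≤ Z.card := Finset.card_filter_le _ _

private lemma rk_strict {x x' : Fin m} (hx : x ∈ Z) (hxx : x < x') :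
    rk Z x' < rk Z x := by
  apply Finset.card_lt_card
  constructor
  · intro l hl
    simp only [rk, Finset.mem_filter] at hl ⊢
    exact ⟨hl.1, le_trans hxx.le hl.2⟩
  · intro hsub
    have hxmem : x ∈ Z.filter (fun l => x ≤ l) := by simp [hx]
    have := hsub hxmem
    simp only [Finset.mem_filter] at this
    exact absurd this.2 (not_le.2 hxx)

private lemma rk_injOn : Set.InjOn (rk Z) Z := by
  intro a ha b hb hab
  by_contra hne
  rcases lt_or_gt_of_ne (fun h => hne h) with h | h
  · exact absurd hab (by have := rk_strict Z ha h; omega)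
  · exact absurd hab (by have := rk_strict Z hb h; omega)

private lemma rk_image : Z.image (rk Z) = Finset.Icc 1 Z.card := by
  apply Finset.eq_of_subset_of_card_le
  · intro v hv
    simp only [Finset.mem_image] at hv
    obtain ⟨x, hx, rfl⟩ := hv
    simp only [Finset.mem_Icc]
    exact ⟨rk_pos Z hx, rk_le Z⟩
  · rw [Nat.card_Icc]
    rw [Finset.card_image_of_injOn (rk_injOn Z)]
    omega

lemma oset_card (k : ℕ) (hk : 1 ≤ k) :
    Nat.card (OSet Z k) = NN Z.card k := by
  classical
  set j := Z.card with hj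
  rcases Nat.lt_or_ge (j+1) k with hgt | hle
  · -- empty case
    have : IsEmpty (OSet Z k) := by
      constructor; rintro ⟨O, hsub, hcond, hcard⟩
      have := Finset.card_le_card hsub
      omega
    rw [Nat.card_of_isEmpty, NN]
    split_ifs <;> omega
  rcases eq_or_lt_of_le hle with heq | hlt
  · -- k = j + 1 : O must be empty, unique
    have : Unique (OSet Z k) := by
      refine ⟨⟨⟨∅, by simp, ?_, by simp; omega⟩⟩, ?_⟩
      · intro i₁ h₁; simp at h₁
      · rintro ⟨O, hsub, hcond, hcard⟩
        apply Subtype.ext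
        simp only
        rw [Finset.card_eq_zero.1 (by omega : O.card = 0)]
    rw [Nat.card_unique, NN, if_pos heq]
  -- now k ≤ j
  rcases eq_or_lt_of_le (by omega : k ≤ j) with heq | hklt
  · -- k = j : singletons
    have he : OSet Z k ≃ {a // a ∈ Z} := by
      refine Equiv.ofBijective ?_ ⟨?_, ?_⟩ |>.symm
      · refine fun a => ⟨{a.1}, by simp [a.2], ?_, by simp; omega⟩
        intro i₁ h₁ i₂ h₂ h12 l hl hil
        simp only [Finset.mem_singleton] at h₁ h₂
        omega
      · intro a b hab
        apply Subtype.ext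
        have := congrArg Subtype.val hab
        simpa using this
      · rintro ⟨O, hsub, hcond, hcard⟩
        have hO1 : O.card = 1 := by omega
        obtain ⟨a, ha⟩ := Finset.card_eq_one.1 hO1
        refine ⟨⟨a, hsub (by simp [ha])⟩, ?_⟩
        apply Subtype.ext; simp [ha]
    rw [Nat.card_congr he]
    rw [NN, if_neg (by omega), if_pos heq]
    rw [Nat.card_eq_fintype_card]
    exact Fintype.card_coe Z
  · -- k < j : unique suffix set of size c = j + 1 - k ≥ 2
    set c : ℕ := j + 1 - k with hc
    have hc2 : 2 ≤ c := by omega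
    have hcj : c ≤ j := by omega
    -- existence
    have hOcard : (Z.filter (fun x => rk Z x ≤ c)).card = c := by
      have h1 : (Z.filter (fun x => rk Z x ≤ c)).card
          = ((Z.filter (fun x => rk Z x ≤ c)).image (rk Z)).card := by
        rw [Finset.card_image_of_injOn ((rk_injOn Z).mono (Finset.filter_subset _ _))]
      have h2 : (Z.filter (fun x => rk Z x ≤ c)).image (rk Z)
          = (Z.image (rk Z)).filter (fun v => v ≤ c) := by
        rw [Finset.filter_image]
      rw [h1, h2, rk_image]
      have : (Finset.Icc 1 j).filter (fun v => v ≤ c) = Finset.Icc 1 c := by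
        ext v; simp only [Finset.mem_filter, Finset.mem_Icc]; omega
      rw [this, Nat.card_Icc]
      omega
    have hex : ∀ x ∈ Z, ∀ x' ∈ Z, x < x' → rk Z x ≤ c → rk Z x' ≤ c := by
      intro x hx x' _ hlt hle
      have := rk_strict Z hx hlt
      omega
    have hmem : Unique (OSet Z k) := by
      refine ⟨⟨⟨Z.filter (fun x => rk Z x ≤ c), Finset.filter_subset _ _, ?_, by
        rw [hOcard]; omega⟩⟩, ?_⟩
      · intro i₁ h₁ i₂ h₂ h12 l hl hil
        simp only [Finset.mem_filter] at h₁ ⊢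
        exact ⟨hl, hex _ h₁.1 _ hl hil h₁.2⟩
      · rintro ⟨O, hsub, hcond, hcard⟩
        apply Subtype.ext
        simp only
        have hOc : O.card = c := by omega
        have hne : O.Nonempty := Finset.card_pos.1 (by omega)
        set a := O.min' hne with ha
        have haO : a ∈ O := O.min'_mem hne
        -- O = Z.filter (a ≤ ·)
        obtain ⟨b, hbO, hba⟩ := Finset.exists_mem_ne (s := O) (by omega) a
        have hab : a < b := lt_of_le_of_ne (O.min'_le b hbO) (Ne.symm hba)
        have hOeq : O = Z.filter (fun l => a ≤ l) := by
          apply Finset.Subset.antisymm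
          · intro x hx
            simp only [Finset.mem_filter]
            exact ⟨hsub hx, O.min'_le x hx⟩
          · intro l hl
            simp only [Finset.mem_filter] at hl
            rcases eq_or_lt_of_le hl.2 with rfl | hlt'
            · exact haO
            · exact hcond a haO b hbO hab l hl.1 hlt'
        -- rk a = c and filters agree
        have hrka : rk Z a = c := by
          rw [← hOc, hOeq]; rfl
        rw [hOeq]
        ext l
        simp only [Finset.mem_filter]
        constructor
        · rintro ⟨hlZ, hal⟩
          refine ⟨hlZ, ?_⟩
          rcases eq_or_lt_of_le hal with rfl | hlt'
          · omega
          · have := rk_strict Z (hsub haO) hlt'; omega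
        · rintro ⟨hlZ, hrl⟩
          refine ⟨hlZ, ?_⟩
          by_contra hla
          push_neg at hla
          have := rk_strict Z hlZ hla
          omega
    rw [Nat.card_unique, NN, if_neg (by omega), if_neg (by omega), if_pos hklt]
end OSetCount

def ZS {m : ℕ} (y : Fin m → ℕ) : Finset (Fin m) :=
  Finset.univ.filter (fun i => y i = 0)

def bwd {m : ℕ} (y : Fin m → ℕ) (O : Finset (Fin m)) : Fin (m+1) → ℕ :=
  Fin.cases 0 (fun i => if y i = 0 then (if i ∈ O then 1 else 0) else y i + 1)

lemma zeroStat_succ {m : ℕ} (e : Fin (m+1) → ℕ) (h0 : e 0 = 0) :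
    zeroStat e = 1 + (Finset.univ.filter (fun i : Fin m => e i.succ = 0)).card := by
  unfold zeroStat
  rw [Finset.card_filter, Fin.sum_univ_succ, Finset.card_filter]
  simp [h0]

lemma zero_count_key {m : ℕ} (y : Fin m → ℕ) (e : Fin (m+1) → ℕ) (h0 : e 0 = 0)
    (hdel : ∀ i : Fin m, e i.succ - 1 = y i)
    (hy : ∀ i : Fin m, y i = 0 → e i.succ ≤ 1) :
    zeroStat e + (Finset.univ.filter (fun i : Fin m => y i = 0 ∧ e i.succ = 1)).card
      = 1 + (ZS y).card := by
  classical
  have hsplit := Finset.card_filter_add_card_filter_not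
    (s := ZS y) (p := fun i => e i.succ = 1)
  have h1 : (ZS y).filter (fun i => e i.succ = 1)
      = Finset.univ.filter (fun i : Fin m => y i = 0 ∧ e i.succ = 1) := by
    rw [ZS, Finset.filter_filter]
  have h2 : (ZS y).filter (fun i => ¬ e i.succ = 1)
      = Finset.univ.filter (fun i : Fin m => e i.succ = 0) := by
    rw [ZS, Finset.filter_filter]
    ext i
    simp only [Finset.mem_filter, Finset.mem_univ, true_and]
    constructor
    · rintro ⟨hy0, hne⟩
      have := hy i hy0; omega
    · intro h
      have := hdel i; omega
  rw [h1, h2] at hsplit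
  rw [zeroStat_succ e h0]
  omega

section Bwd
variable {m : ℕ} {y : Fin m → ℕ} {O : Finset (Fin m)}

lemma bwd_zero : bwd y O 0 = 0 := by simp [bwd]

lemma bwd_succ (i : Fin m) :
    bwd y O i.succ = if y i = 0 then (if i ∈ O then 1 else 0) else y i + 1 := by
  simp [bwd]

lemma bwd_invSeq (hyI : InvSeq y) : InvSeq (bwd y O) := by
  intro i
  induction i using Fin.cases with
  | zero => simp [bwd_zero]
  | succ i =>
    rw [bwd_succ]
    have := hyI i
    have hv : ((i.succ : Fin (m+1)) : ℕ) = (i : ℕ) + 1 := Fin.val_succ i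
    split_ifs <;> omega

lemma bwd_del : del (bwd y O) = y := by
  funext i
  simp only [del, bwd_succ]
  split_ifs <;> omega

lemma bwd_noPat (hyC : NoPat y) (hsub : O ⊆ ZS y) (hcond : CondO (ZS y) O) :
    NoPat (bwd y O) := by
  intro i l j hil hij hei
  rcases Fin.eq_zero_or_eq_succ i with rfl | ⟨i₀, rfl⟩
  · simp [bwd_zero]
  rcases Fin.eq_zero_or_eq_succ l with rfl | ⟨l₀, rfl⟩
  · exact absurd hil (by simp [Fin.lt_def])
  rcases Fin.eq_zero_or_eq_succ j with rfl | ⟨j₀, rfl⟩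
  · exact absurd hij (by simp [Fin.lt_def])
  have hil' : i₀ < l₀ := Fin.succ_lt_succ_iff.mp hil
  have hij' : i₀ < j₀ := Fin.succ_lt_succ_iff.mp hij
  rw [bwd_succ] at hei ⊢
  rw [bwd_succ (O := O) (y := y) l₀] at hei
  rw [bwd_succ (O := O) (y := y) j₀]
  by_cases hyi : y i₀ = 0
  · rw [if_pos hyi] at hei ⊢
    by_cases hiO : i₀ ∈ O
    · rw [if_pos hiO] at hei ⊢
      -- value 1 at i₀ and l₀
      have hlO : l₀ ∈ O := by
        by_contra hne
        by_cases hyl : y l₀ = 0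
        · rw [if_pos hyl, if_neg hne] at hei; omega
        · rw [if_neg hyl] at hei; omega
      -- goal : 1 ≤ bwd j
      by_cases hyj : y j₀ = 0
      · rw [if_pos hyj]
        have hjZ : j₀ ∈ ZS y := by simp [ZS, hyj]
        have := hcond i₀ hiO l₀ hlO hil' j₀ hjZ hij'
        rw [if_pos this]
      · rw [if_neg hyj]; omega
    · rw [if_neg hiO]; simp
  · rw [if_neg hyi] at hei ⊢
    have hyl : ¬ y l₀ = 0 := by
      by_contra hyl
      rw [if_pos hyl] at hei
      split_ifs at hei <;> omega
    rw [if_neg hyl] at hei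
    have heq : y i₀ = y l₀ := by omega
    have := hyC i₀ l₀ j₀ hil' hij' heq
    have hyj : ¬ y j₀ = 0 := by omega
    rw [if_neg hyj]
    omega

lemma bwd_le_one (i : Fin m) (hyi : y i = 0) : bwd y O i.succ ≤ 1 := by
  rw [bwd_succ, if_pos hyi]
  split_ifs <;> omega

lemma bwd_zeroStat (hsub : O ⊆ ZS y) :
    zeroStat (bwd y O) + O.card = 1 + (ZS y).card := by
  classical
  have hfilter : Finset.univ.filter (fun i : Fin m => y i = 0 ∧ bwd y O i.succ = 1) = O := by
    ext i
    simp only [Finset.mem_filter, Finset.mem_univ, true_and, bwd_succ]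
    constructor
    · rintro ⟨hy0, h1⟩
      rw [if_pos hy0] at h1
      by_contra hne
      rw [if_neg hne] at h1; omega
    · intro hiO
      have hy0 : y i = 0 := by have := hsub hiO; simpa [ZS] using this
      exact ⟨hy0, by rw [if_pos hy0, if_pos hiO]⟩
  have := zero_count_key y (bwd y O) bwd_zero (fun i => congrFun bwd_del i)
    (fun i h => bwd_le_one i h)
  rw [hfilter] at this
  exact this

end Bwd

noncomputable def fiber_equiv {m : ℕ} (y : Fin m → ℕ) (hyI : InvSeq y) (hyC : NoPat y)
    (k : ℕ) :
    {e : Fin (m+1) → ℕ // (InvSeq e ∧ NoPat e ∧ zeroStat e = k) ∧ del e = y}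
      ≃ OSet (ZS y) k := by
  classical
  refine ⟨fun x => ⟨Finset.univ.filter (fun i : Fin m => y i = 0 ∧ x.1 i.succ = 1), ?_⟩,
    fun O => ⟨bwd y O.1, ?_⟩, ?_, ?_⟩
  · -- forward well-defined
    obtain ⟨e, ⟨⟨hI, hC, hz⟩, hd⟩⟩ := x
    dsimp only
    have hdel : ∀ i : Fin m, e i.succ - 1 = y i := fun i => congrFun hd i
    have h0 : e 0 = 0 := by have := hI 0; simpa using this
    refine ⟨?_, ?_, ?_⟩
    · intro i hi
      simp only [Finset.mem_filter, ZS] at hi ⊢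
      exact ⟨hi.1, hi.2.1⟩
    · intro i₁ h₁ i₂ h₂ h12 l hl hil
      simp only [Finset.mem_filter, Finset.mem_univ, true_and, ZS] at h₁ h₂ hl ⊢
      refine ⟨hl, ?_⟩
      by_contra hne
      have hle : e l.succ = 0 := by have := hdel l; omega
      have := hC i₁.succ i₂.succ l.succ
        (Fin.succ_lt_succ_iff.mpr h12) (Fin.succ_lt_succ_iff.mpr hil)
        (by rw [h₁.2, h₂.2])
      rw [h₁.2, hle] at this
      omega
    · have := zero_count_key y e h0 hdel (fun i h => by have := hdel i; omega)
      omega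
  · -- backward well-defined
    obtain ⟨O, hsub, hcond, hcard⟩ := O
    dsimp only
    exact ⟨⟨bwd_invSeq hyI, bwd_noPat hyC hsub hcond, by
        have := bwd_zeroStat (O := O) (y := y) hsub; omega⟩, bwd_del⟩
  · -- left inverse
    rintro ⟨e, ⟨⟨hI, hC, hz⟩, hd⟩⟩
    have hdel : ∀ i : Fin m, e i.succ - 1 = y i := fun i => congrFun hd i
    have h0 : e 0 = 0 := by have := hI 0; simpa using this
    apply Subtype.ext
    dsimp only
    funext i
    induction i using Fin.cases with
    | zero => rw [bwd_zero, h0]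
    | succ i =>
      rw [bwd_succ]
      by_cases hy0 : y i = 0
      · rw [if_pos hy0]
        by_cases h1 : e i.succ = 1
        · rw [if_pos (by simp [hy0, h1])]
          omega
        · rw [if_neg (by simp [hy0, h1] : ¬ _)]
          have := hdel i; omega
      · rw [if_neg hy0]
        have := hdel i; omega
  · -- right inverse
    rintro ⟨O, hsub, hcond, hcard⟩
    apply Subtype.ext
    dsimp only
    ext i
    simp only [Finset.mem_filter, Finset.mem_univ, true_and, bwd_succ]
    constructor
    · rintro ⟨hy0, h1⟩
      rw [if_pos hy0] at h1
      by_contra hne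
      rw [if_neg hne] at h1; omega
    · intro hiO
      have hy0 : y i = 0 := by have := hsub hiO; simpa [ZS] using this
      exact ⟨hy0, by rw [if_pos hy0, if_pos hiO]⟩


section Assembly
open Finset

def Good (m : ℕ) : Type := {f : Fin m → ℕ // InvSeq f ∧ NoPat f}

instance goodFinite (m : ℕ) : Finite (Good m) := finite_inv _

def Fmap {m k : ℕ} (x : SubP (m+1) k) : Good m :=
  ⟨del x.1, invSeq_del x.1 x.2.1, noPat_del x.1 x.2.2.1⟩

lemma fiber_card {m k : ℕ} (hk : 1 ≤ k) (y : Good m) :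
    Nat.card {x : SubP (m+1) k // Fmap x = y} = NN (zeroStat y.1) k := by
  have e1 : {x : SubP (m+1) k // Fmap x = y}
      ≃ {e : Fin (m+1) → ℕ // (InvSeq e ∧ NoPat e ∧ zeroStat e = k) ∧ del e = y.1} :=
    { toFun := fun x => ⟨x.1.1, x.1.2, congrArg Subtype.val x.2⟩
      invFun := fun e => ⟨⟨e.1, e.2.1⟩, Subtype.ext e.2.2⟩
      left_inv := fun x => rfl
      right_inv := fun e => rfl }
  rw [Nat.card_congr e1, Nat.card_congr (fiber_equiv y.1 y.2.1 y.2.2 k),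
    oset_card (ZS y.1) k hk]
  rfl

lemma z'_succ (m k : ℕ) (hk : 1 ≤ k) :
    z' (m+1) k = ∑ j ∈ Finset.range (m+2), NN j k * z' m j := by
  classical
  haveI : Fintype (Good m) := Fintype.ofFinite _
  haveI : ∀ y : Good m, Fintype {x : SubP (m+1) k // Fmap x = y} :=
    fun y => Fintype.ofFinite _
  haveI : Fintype (SubP (m+1) k) := Fintype.ofFinite _
  have h1 : z' (m+1) k = ∑ y : Good m, Nat.card {x : SubP (m+1) k // Fmap x = y} := by
    rw [z', ← Nat.card_congr (Equiv.sigmaFiberEquiv (Fmap (m := m) (k := k)))]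
    rw [Nat.card_eq_fintype_card, Fintype.card_sigma]
    simp [Nat.card_eq_fintype_card]
  rw [h1, Finset.sum_congr rfl (fun y _ => fiber_card hk y)]
  have hfib := Finset.sum_fiberwise_of_maps_to
    (s := (Finset.univ : Finset (Good m))) (t := Finset.range (m+2))
    (g := fun y : Good m => zeroStat y.1)
    (fun y _ => Finset.mem_range.mpr (lt_of_le_of_lt (zeroStat_le y.1) (by omega)))
    (fun y : Good m => NN (zeroStat y.1) k)
  rw [← hfib]
  apply Finset.sum_congr rfl
  intro j hj
  rw [Finset.sum_congr rfl
    (fun y hy => by rw [(Finset.mem_filter.mp hy).2])]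
  rw [Finset.sum_const, smul_eq_mul]
  have hcard : (Finset.univ.filter (fun y : Good m => zeroStat y.1 = j)).card = z' m j := by
    have e2 : {y : Good m // zeroStat y.1 = j} ≃ SubP m j :=
      { toFun := fun x => ⟨x.1.1, x.1.2.1, x.1.2.2, x.2⟩
        invFun := fun e => ⟨⟨e.1, e.2.1, e.2.2.1⟩, e.2.2.2⟩
        left_inv := fun x => rfl
        right_inv := fun e => rfl }
    rw [← Fintype.card_subtype, z', ← Nat.card_eq_fintype_card, Nat.card_congr e2]
  rw [hcard, mul_comm]

lemma sum_NN (m k : ℕ) (hk : 1 ≤ k) (hk2 : k ≤ m+1) :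
    ∑ j ∈ Finset.range (m+2), NN j k * z' m j
      = z' m (k-1) + k * z' m k + ∑ j ∈ Finset.Icc (k+1) m, z' m j := by
  classical
  have hpt : ∀ j ∈ Finset.range (m+2), NN j k * z' m j
      = (if j = k-1 then z' m (k-1) else 0) + (if j = k then k * z' m k else 0)
        + (if j ∈ Finset.Icc (k+1) (m+1) then z' m j else 0) := by
    intro j hj
    rw [Finset.mem_range] at hj
    rcases eq_or_ne j (k-1) with rfl | h1
    · rw [NN, if_pos (by omega), if_pos rfl, if_neg (by omega),
        if_neg (by simp [Finset.mem_Icc])]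
      ring
    rcases eq_or_ne j k with rfl | h2
    · rw [NN, if_neg (by omega), if_pos rfl, if_neg h1, if_pos rfl,
        if_neg (by simp [Finset.mem_Icc])]
      ring
    rcases Nat.lt_or_ge k j with h3 | h3
    · rw [NN, if_neg (by omega), if_neg (by omega), if_pos h3, if_neg h1, if_neg h2,
        if_pos (by simp [Finset.mem_Icc]; omega)]
      ring
    · rw [NN, if_neg (by omega), if_neg (by omega), if_neg (by omega), if_neg h1,
        if_neg h2, if_neg (by simp [Finset.mem_Icc]; omega)]
      ring
  rw [Finset.sum_congr rfl hpt, Finset.sum_add_distrib, Finset.sum_add_distrib]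
  rw [Finset.sum_ite_eq' (Finset.range (m+2)) (k-1) (fun _ => z' m (k-1)),
    if_pos (Finset.mem_range.mpr (by omega))]
  rw [Finset.sum_ite_eq' (Finset.range (m+2)) k (fun _ => k * z' m k),
    if_pos (Finset.mem_range.mpr (by omega))]
  congr 1
  rw [Finset.sum_ite_mem, Finset.inter_eq_right.mpr
    (by intro x hx; rw [Finset.mem_Icc] at hx; exact Finset.mem_range.mpr (by omega))]
  by_cases hkm : k ≤ m
  · rw [Finset.sum_Icc_succ_top (by omega : k+1 ≤ m+1), z'_gt (by omega), add_zero]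
  · have h1 : Finset.Icc (k+1) (m+1) = ∅ := Finset.Icc_eq_empty (by omega)
    have h2 : Finset.Icc (k+1) m = ∅ := Finset.Icc_eq_empty (by omega)
    rw [h1, h2]

lemma z_eq_z' (n k : ℕ) : z n k = z' n k := by
  apply Nat.card_congr
  apply Equiv.subtypeEquivRight
  intro e
  have := avoids_iff e
  tauto

lemma z'_one (k : ℕ) : z' 1 k = if k = 1 then 1 else 0 := by
  have hz : ∀ e : Fin 1 → ℕ, InvSeq e → e = fun _ => 0 := by
    intro e he
    funext i
    have h1 := he i
    have h2 := i.isLt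
    omega
  split_ifs with hk
  · subst hk
    have : Unique (SubP 1 1) := by
      refine ⟨⟨⟨fun _ => 0, ?_, ?_, ?_⟩⟩, ?_⟩
      · intro i; simp
      · intro i l j hil hij heq; simp
      · simp [zeroStat]
      · rintro ⟨e, hI, hC, hzs⟩
        exact Subtype.ext (hz e hI)
    exact Nat.card_unique
  · have : IsEmpty (SubP 1 k) := by
      constructor
      rintro ⟨e, hI, hC, hzs⟩
      rw [hz e hI] at hzs
      simp [zeroStat] at hzs
      omega
    exact Nat.card_of_isEmpty

lemma T_gt : ∀ m : ℕ, ∀ j : ℕ, m < j → T m j = 0 := by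
  intro m
  induction m using Nat.strong_induction_on with
  | _ m ih =>
    match m with
    | 0 => intro j hj; rfl
    | 1 => intro j hj; simp only [T]; rw [if_neg (by omega)]
    | n+2 =>
      intro j hj
      simp only [T]
      rw [if_neg (by omega)]
      rw [ih (n+1) (by omega) (j-1) (by omega), ih (n+1) (by omega) j (by omega)]
      rw [Finset.Icc_eq_empty (by omega)]
      simp

lemma T_zero : ∀ m : ℕ, 1 ≤ m → T m 0 = 0 := by
  intro m hm
  match m with
  | 1 => rfl
  | n+2 => simp [T]

end Assembly

theorem stmt_13 :
    (∀ k : ℕ, z 1 k = if k = 1 then 1 else 0) ∧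
    (∀ n k : ℕ, 2 ≤ n → 1 ≤ k → k ≤ n →
      z n k = z (n - 1) (k - 1) + k * z (n - 1) k +
        ∑ j ∈ Finset.Icc (k + 1) (n - 1), z (n - 1) j) ∧
    (∀ n k : ℕ, 1 ≤ n → 1 ≤ k → k ≤ n → z n k = T n k) := by
  have part1 : ∀ k : ℕ, z 1 k = if k = 1 then 1 else 0 := by
    intro k; rw [z_eq_z', z'_one]
  have part2 : ∀ n k : ℕ, 2 ≤ n → 1 ≤ k → k ≤ n →
      z n k = z (n - 1) (k - 1) + k * z (n - 1) k +
        ∑ j ∈ Finset.Icc (k + 1) (n - 1), z (n - 1) j := by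
    intro n k hn hk1 hk2
    obtain ⟨m, rfl⟩ : ∃ m, n = m + 2 := ⟨n - 2, by omega⟩
    have hn1 : m + 2 - 1 = m + 1 := by omega
    rw [hn1, z_eq_z', z_eq_z', z_eq_z']
    rw [show m + 2 = (m + 1) + 1 from rfl, z'_succ (m+1) k hk1, sum_NN (m+1) k hk1 (by omega)]
    congr 1
    exact Finset.sum_congr rfl (fun j _ => (z_eq_z' (m+1) j).symm)
  refine ⟨part1, part2, ?_⟩
  intro n
  induction n using Nat.strong_induction_on with
  | _ n ih =>
    intro k hn hk1 hk2
    match n, hn with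
    | 1, _ =>
      have : k = 1 := by omega
      subst this
      rw [part1 1]
      rfl
    | (m+2), _ =>
      rw [part2 (m+2) k (by omega) hk1 hk2]
      have hT : T (m+2) k = T (m+1) (k-1) + k * T (m+1) k +
          ∑ j ∈ Finset.Icc (k+1) (m+1), T (m+1) j := by
        simp only [T]
        rw [if_neg (by omega)]
      have hn1 : m + 2 - 1 = m + 1 := by omega
      rw [hn1, hT]
      congr 1
      · congr 1
        · -- z (m+1) (k-1) = T (m+1) (k-1)
          rcases eq_or_ne k 1 with rfl | hk
          · simp only [Nat.sub_self]
            rw [z_eq_z', z'_zero (by omega), T_zero (m+1) (by omega)]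
          · exact ih (m+1) (by omega) (k-1) (by omega) (by omega) (by omega)
        · -- k * z (m+1) k = k * T (m+1) k
          rcases Nat.lt_or_ge (m+1) k with hgt | hle
          · rw [z_eq_z', z'_gt hgt, T_gt (m+1) k hgt]
          · rw [ih (m+1) (by omega) k (by omega) hk1 hle]
      · exact Finset.sum_congr rfl (fun j hj => by
          rw [Finset.mem_Icc] at hj
          exact ih (m+1) (by omega) j (by omega) (by omega) (by omega))
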